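/- Let E be a real normed vector space, K ⊆ E a subset, and x : ℝ → E a curve such that x t ∈ K for every t ∈ [0, 1]. If x has derivative v at 0 from the right, i.e. HasDerivWithinAt x v (Set.Ici 0) 0, then v belongs to the tangent cone of K at x 0, i.e. v ∈ tangentConeAt ℝ K (x 0). -/

import Mathlib

/-- If a curve lies in `K` on `[0, 1]` and has a right derivative `v` at `0`, then `v`
belongs to the Severi–Bouligand tangent (contingent) cone of `K` at `x 0`. -/
theorem velocity_mem_tangentCone
    {E : Type*} [NormedAddCommGroup E] [NormedSpace ℝ E]
    (K : Set E) (x : ℝ → E) (hx : ∀ t ∈ Set.Icc (0:ℝ) 1, x t ∈ K)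
    (v : E) (hderiv : HasDerivWithinAt x v (Set.Ici 0) 0) :
    v ∈ tangentConeAt ℝ K (x 0) := by
  have hpos : ∀ n : ℕ, (0:ℝ) < ((n : ℝ) + 1)⁻¹ := fun n => by positivity
  refine mem_tangentConeAt_iff_exists_seq_norm_tendsto_atTop.2
    ⟨fun n => (n : ℝ) + 1, fun n => x (((n : ℝ) + 1)⁻¹) - x 0, ?_, ?_, ?_⟩
  swap
  · refine Filter.Eventually.of_forall fun n => ?_
    have h1 : ((n : ℝ) + 1)⁻¹ ∈ Set.Icc (0:ℝ) 1 := by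
      constructor
      · positivity
      · rw [inv_le_one_iff₀]; right; linarith [Nat.cast_nonneg (α := ℝ) n]
    simpa using hx _ h1
  · have h : Filter.Tendsto (fun n : ℕ => (n : ℝ) + 1) Filter.atTop Filter.atTop :=
      Filter.tendsto_atTop_add_const_right _ 1 tendsto_natCast_atTop_atTop
    have := Filter.tendsto_abs_atTop_atTop.comp h
    simpa [Real.norm_eq_abs, Function.comp_def] using this
  · have hslope : Filter.Tendsto (slope x 0) (nhdsWithin 0 (Set.Ici 0 \ {0})) (nhds v) :=
      hasDerivWithinAt_iff_tendsto_slope.mp hderiv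
    have htn : Filter.Tendsto (fun n : ℕ => ((n : ℝ) + 1)⁻¹) Filter.atTop
        (nhdsWithin 0 (Set.Ici 0 \ {0})) := by
      rw [tendsto_nhdsWithin_iff]
      constructor
      · simpa only [one_div] using tendsto_one_div_add_atTop_nhds_zero_nat (𝕜 := ℝ)
      · exact Filter.Eventually.of_forall fun n =>
          ⟨le_of_lt (hpos n), ne_of_gt (hpos n)⟩
    have := hslope.comp htn
    refine this.congr fun n => ?_
    simp [slope, vsub_eq_sub, Function.comp]
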